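/- Let P be a symmetric positive definite n×n real matrix with maximal eigenvalue λ. The function γ(θ) = -log det(I - θP) + tr((I - θP)^{-1} - I) is strictly convex on (0, 1/λ). -/

import Mathlib

open Matrix

private lemma key_strict {lam mu : ℝ} (hmu : 0 < mu) (hle : mu ≤ lam) :
    StrictConvexOn ℝ (Set.Ioo 0 (1 / lam))
      (fun θ : ℝ => -Real.log (1 - θ * mu) + ((1 - θ * mu)⁻¹ - 1)) := by
  have hlam : 0 < lam := lt_of_lt_of_le hmu hle
  have hpos : ∀ θ ∈ Set.Ioo (0:ℝ) (1 / lam), 0 < 1 - θ * mu := by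
    intro θ hθ
    have h1 : θ * mu ≤ θ * lam := mul_le_mul_of_nonneg_left hle hθ.1.le
    have h2 : θ * lam < 1 := by
      have := hθ.2
      rw [lt_div_iff₀ hlam] at this
      linarith
    linarith
  constructor
  · exact convex_Ioo _ _
  · intro x hx y hy hxy a b ha hb hab
    have hux : (0:ℝ) < 1 - x * mu := hpos x hx
    have huy : (0:ℝ) < 1 - y * mu := hpos y hy
    have huv : (1 : ℝ) - x * mu ≠ 1 - y * mu := by
      intro h
      apply hxy
      have : x * mu = y * mu := by linarith
      exact mul_right_cancel₀ hmu.ne' this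
    have hkey : 1 - (a * x + b * y) * mu = a * (1 - x * mu) + b * (1 - y * mu) := by
      ring_nf
      nlinarith [hab]
    have hlog := strictConcaveOn_log_Ioi.2 (Set.mem_Ioi.2 hux) (Set.mem_Ioi.2 huy) huv ha hb hab
    have hinv := (strictConvexOn_zpow (m := -1) (by decide) (by decide)).2
      (Set.mem_Ioi.2 hux) (Set.mem_Ioi.2 huy) huv ha hb hab
    simp only [smul_eq_mul] at hlog hinv
    simp only [_root_.zpow_neg, zpow_one] at hinv
    simp only [smul_eq_mul]
    rw [hkey]
    have := hlog
    nlinarith [hlog, hinv]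

private lemma sum_strictConvexOn' {ι : Type*} {s : Set ℝ} {f : ι → ℝ → ℝ}
    {t : Finset ι} (ht : t.Nonempty) (hf : ∀ i ∈ t, StrictConvexOn ℝ s (f i)) :
    StrictConvexOn ℝ s (fun θ => ∑ i ∈ t, f i θ) := by
  classical
  induction ht using Finset.Nonempty.cons_induction with
  | singleton i => simpa using hf i (by simp)
  | cons i t hi ht ih =>
      simp only [Finset.sum_cons]
      exact (hf i (by simp)).add (ih fun j hj => hf j (by simp [hj]))

private lemma sum_strictConvexOn {ι : Type*} [Fintype ι] [Nonempty ι] {s : Set ℝ}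
    {f : ι → ℝ → ℝ} (hf : ∀ i, StrictConvexOn ℝ s (f i)) :
    StrictConvexOn ℝ s (fun θ => ∑ i, f i θ) :=
  sum_strictConvexOn' Finset.univ_nonempty fun i _ => hf i

/-- γ(θ) = -log det(I - θP) + tr((I - θP)⁻¹ - I) is strictly convex on (0, 1/λ). -/
theorem stmt_2 {n : ℕ} (P : Matrix (Fin n) (Fin n) ℝ) (hP : P.PosDef)
    (lam : ℝ) (hlam : IsGreatest (Set.range hP.1.eigenvalues) lam) :
    StrictConvexOn ℝ (Set.Ioo 0 (1 / lam))
      (fun θ : ℝ => -Real.log ((1 - θ • P).det) + Matrix.trace ((1 - θ • P)⁻¹ - 1)) := by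
  classical
  set μ := hP.1.eigenvalues with hμ
  obtain ⟨i₀, hi₀⟩ := hlam.1
  haveI : Nonempty (Fin n) := ⟨i₀⟩
  have hμpos : ∀ i, 0 < μ i := hP.eigenvalues_pos
  have hμle : ∀ i, μ i ≤ lam := fun i => hlam.2 ⟨i, rfl⟩
  have hlampos : 0 < lam := hi₀ ▸ hμpos i₀
  -- positivity of 1 - θ μ i on the interval
  have hpos : ∀ θ ∈ Set.Ioo (0:ℝ) (1 / lam), ∀ i, 0 < 1 - θ * μ i := by
    intro θ hθ i
    have h1 : θ * μ i ≤ θ * lam := mul_le_mul_of_nonneg_left (hμle i) hθ.1.le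
    have h2 : θ * lam < 1 := by
      have := hθ.2
      rw [lt_div_iff₀ hlampos] at this
      linarith
    linarith
  -- spectral decomposition
  set U : Matrix (Fin n) (Fin n) ℝ := (hP.1.eigenvectorUnitary : Matrix (Fin n) (Fin n) ℝ)
  have hUU : U * star U = 1 := (Matrix.mem_unitaryGroup_iff).mp hP.1.eigenvectorUnitary.2
  have hUU' : star U * U = 1 := (Matrix.mem_unitaryGroup_iff').mp hP.1.eigenvectorUnitary.2
  have hspec : P = U * diagonal μ * star U := by
    have := hP.1.spectral_theorem
    simpa [U, hμ] using this
  have hdecomp : ∀ θ : ℝ, 1 - θ • P = U * diagonal (fun i => 1 - θ * μ i) * star U := by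
    intro θ
    have : diagonal (fun i => 1 - θ * μ i) = 1 - θ • diagonal μ := by
      ext i j
      rcases eq_or_ne i j with rfl | h
      · simp [Matrix.sub_apply, Matrix.one_apply, Matrix.smul_apply]
      · simp [Matrix.sub_apply, Matrix.one_apply, Matrix.smul_apply, h]
    rw [this, Matrix.mul_sub, Matrix.sub_mul, Matrix.mul_one, hUU,
      Matrix.mul_smul, Matrix.smul_mul, ← hspec]
  -- pointwise formula for the function
  apply StrictConvexOn.congr
    (f := fun θ : ℝ => ∑ i, (-Real.log (1 - θ * μ i) + ((1 - θ * μ i)⁻¹ - 1)))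
  · exact sum_strictConvexOn fun i => key_strict (hμpos i) (hμle i)
  · intro θ hθ
    have hne : ∀ i, (1 : ℝ) - θ * μ i ≠ 0 := fun i => (hpos θ hθ i).ne'
    have hdet : (1 - θ • P).det = ∏ i, (1 - θ * μ i) := by
      rw [hdecomp θ, det_mul_right_comm, hUU, Matrix.one_mul, det_diagonal]
    have hinv : (1 - θ • P)⁻¹ = U * diagonal (fun i => (1 - θ * μ i)⁻¹) * star U := by
      apply Matrix.inv_eq_right_inv
      rw [hdecomp θ]
      calc U * diagonal (fun i => 1 - θ * μ i) * star U *
            (U * diagonal (fun i => (1 - θ * μ i)⁻¹) * star U)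
          = U * diagonal (fun i => 1 - θ * μ i) * (star U * U) *
            diagonal (fun i => (1 - θ * μ i)⁻¹) * star U := by
            simp only [Matrix.mul_assoc]
        _ = 1 := by
            rw [hUU', Matrix.mul_one, Matrix.mul_assoc U, diagonal_mul_diagonal]
            have : (fun i => (1 - θ * μ i) * (1 - θ * μ i)⁻¹) = fun _ => (1:ℝ) := by
              ext i; exact mul_inv_cancel₀ (hne i)
            rw [this, diagonal_one, Matrix.mul_one, hUU]
    have htr : Matrix.trace ((1 - θ • P)⁻¹ - 1) = ∑ i, ((1 - θ * μ i)⁻¹ - 1) := by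
      rw [hinv, Matrix.trace_sub, Matrix.trace_one, trace_mul_cycle, hUU', Matrix.one_mul,
        Matrix.trace_diagonal, Finset.sum_sub_distrib]
      simp [Finset.card_univ]
    beta_reduce
    rw [hdet, htr, Real.log_prod (fun i _ => hne i), Finset.sum_add_distrib,
      Finset.sum_neg_distrib]
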